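/- In the simple complete graph K_5, if T is a set of six edges forming a subgraph isomorphic to K_{2,3}, then there is no family of six connected, pairwise disjoint, pairwise incident edge sets traversed by T. -/

import Mathlib

/-- An edge set `F` is connected if it is nonempty and any two of its edges are
linked by a chain of edges of `F`, consecutive ones sharing an endpoint. -/
def EdgesConnected {V : Type*} (F : Set (Sym2 V)) : Prop :=
  F.Nonempty ∧ ∀ e ∈ F, ∀ f ∈ F,
    Relation.ReflTransGen (fun a b => a ∈ F ∧ b ∈ F ∧ ∃ v : V, v ∈ a ∧ v ∈ b) e f

/-- Two edge sets are incident if some edge of one shares an endpoint with some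
edge of the other. -/
def EdgesIncident {V : Type*} (F F' : Set (Sym2 V)) : Prop :=
  ∃ e ∈ F, ∃ f ∈ F', ∃ v : V, v ∈ e ∧ v ∈ f

/-- The family `𝔎` of pairwise disjoint sets is traversed by `T`. -/
def TraversedBy {α : Type*} (𝔎 : Set (Set α)) (T : Set α) : Prop :=
  (∀ A ∈ 𝔎, ∃! e, e ∈ T ∧ e ∈ A) ∧ ∀ e ∈ T, ∃ A ∈ 𝔎, e ∈ A

/-! ### Auxiliary combinatorial core -/

/-- canonical edges of `K₅`: the six `K_{2,3}`-edges are `0..5`, extras `6..9`. -/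
def cE : Nat → Sym2 (Fin 5)
  | 0 => s(0,2) | 1 => s(0,3) | 2 => s(0,4) | 3 => s(1,2) | 4 => s(1,3) | 5 => s(1,4)
  | 6 => s(0,1) | 7 => s(2,3) | 8 => s(2,4) | _ => s(3,4)

/-- endpoints of the canonical edges, as pairs of naturals. -/
def ep : Nat → Nat × Nat
  | 0 => (0,2) | 1 => (0,3) | 2 => (0,4) | 3 => (1,2) | 4 => (1,3) | 5 => (1,4)
  | 6 => (0,1) | 7 => (2,3) | 8 => (2,4) | _ => (3,4)

def touch (a b : Nat) : Bool :=
  let p := ep a; let q := ep b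
  p.1 == q.1 || p.1 == q.2 || p.2 == q.1 || p.2 == q.2

def mList (o1 o2 o3 o4 : Option Nat) (m : Nat) : List Nat :=
  m :: ((if o1 = some m then [6] else []) ++ (if o2 = some m then [7] else []) ++
        (if o3 = some m then [8] else []) ++ (if o4 = some m then [9] else []))

def cross (F C : List Nat) : Bool :=
  F.any (fun b => decide (b ∉ C) && C.any (fun a => touch a b))

def connSF (F : List Nat) : Bool :=
  F.sublists.all (fun C => C.isEmpty || F.all (fun b => decide (b ∈ C)) || cross F C)

def incB (F G : List Nat) : Bool := F.any (fun a => G.any (fun b => touch a b))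

def msl : List Nat := [0,1,2,3,4,5]
def idxs : List Nat := [0,1,2,3,4,5,6,7,8,9]
def opts : List (Option Nat) := none :: (msl.map some)

def okCfg (o1 o2 o3 o4 : Option Nat) : Bool :=
  (msl.all fun m => msl.all fun m' => m == m' ||
      incB (mList o1 o2 o3 o4 m) (mList o1 o2 o3 o4 m')) &&
  (msl.all fun m => connSF (mList o1 o2 o3 o4 m))

lemma mainCheck : ∀ o1 ∈ opts, ∀ o2 ∈ opts, ∀ o3 ∈ opts, ∀ o4 ∈ opts,
    okCfg o1 o2 o3 o4 = false := by decide

lemma touch_iff : ∀ a ∈ idxs, ∀ b ∈ idxs,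
    (touch a b = true ↔ ∃ v : Fin 5, v ∈ cE a ∧ v ∈ cE b) := by decide

lemma cE_inj : ∀ a ∈ idxs, ∀ b ∈ idxs, cE a = cE b → a = b := by decide

lemma cE_cover : ∀ u v : Fin 5, u ≠ v → ∃ i ∈ idxs, cE i = s(u,v) := by decide

lemma mem_mList {o1 o2 o3 o4 : Option Nat} {m i : Nat} :
    i ∈ mList o1 o2 o3 o4 m ↔
      i = m ∨ (o1 = some m ∧ i = 6) ∨ (o2 = some m ∧ i = 7) ∨
        (o3 = some m ∧ i = 8) ∨ (o4 = some m ∧ i = 9) := by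
  unfold mList
  split_ifs <;> simp_all

lemma msl_idxs : ∀ m ∈ msl, m ∈ idxs := by decide

lemma mList_subset_idxs {o1 o2 o3 o4 : Option Nat} {m : Nat} (hm : m ∈ msl) :
    ∀ i ∈ mList o1 o2 o3 o4 m, i ∈ idxs := by
  intro i hi
  rw [mem_mList] at hi
  simp only [msl, List.mem_cons, List.not_mem_nil, or_false] at hm
  simp only [idxs, List.mem_cons, List.not_mem_nil, or_false]
  rcases hi with rfl | ⟨_, rfl⟩ | ⟨_, rfl⟩ | ⟨_, rfl⟩ | ⟨_, rfl⟩ <;> omega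

lemma cross_rtg {α : Type*} {r : α → α → Prop} {C : Set α} {e f : α}
    (h : Relation.ReflTransGen r e f) (he : e ∈ C) (hf : f ∉ C) :
    ∃ a ∈ C, ∃ b, b ∉ C ∧ r a b := by
  induction h with
  | refl => exact absurd he hf
  | @tail b c hab hbc ih =>
    by_cases hb : b ∈ C
    · exact ⟨b, hb, c, hf, hbc⟩
    · exact ih hb

lemma shareV_map {ν : Fin 5 → Fin 5} (hν : Function.Injective ν) (e f : Sym2 (Fin 5)) :
    (∃ v, v ∈ Sym2.map ν e ∧ v ∈ Sym2.map ν f) ↔ (∃ v, v ∈ e ∧ v ∈ f) := by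
  constructor
  · rintro ⟨v, hv1, hv2⟩
    rw [Sym2.mem_map] at hv1 hv2
    obtain ⟨a, ha, rfl⟩ := hv1
    obtain ⟨b, hb, hab⟩ := hv2
    exact ⟨a, ha, hν hab ▸ hb⟩
  · rintro ⟨v, h1, h2⟩
    exact ⟨ν v, Sym2.mem_map.2 ⟨v, h1, rfl⟩, Sym2.mem_map.2 ⟨v, h2, rfl⟩⟩

/-- the vertex relabeling sending the canonical labels to actual vertices. -/
def νf (x0 x1 y0 y1 y2 : Fin 5) : Fin 5 → Fin 5 := fun i =>
  match i with
  | ⟨0,_⟩ => x0 | ⟨1,_⟩ => x1 | ⟨2,_⟩ => y0 | ⟨3,_⟩ => y1 | ⟨4,_⟩ => y2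

lemma νf_inj {x0 x1 y0 y1 y2 : Fin 5}
    (d01 : x0 ≠ x1) (d23 : y0 ≠ y1) (d24 : y0 ≠ y2) (d34 : y1 ≠ y2)
    (d02 : x0 ≠ y0) (d03 : x0 ≠ y1) (d04 : x0 ≠ y2)
    (d12 : x1 ≠ y0) (d13 : x1 ≠ y1) (d14 : x1 ≠ y2) :
    Function.Injective (νf x0 x1 y0 y1 y2) := by
  intro a b hab
  fin_cases a <;> fin_cases b <;>
    first
      | rfl
      | exact absurd hab (by assumption)
      | exact absurd hab.symm (by assumption)

/-- In `K₅`, if `T` is a set of six edges forming a `K_{2,3}`, then there is no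
family of six connected, pairwise disjoint, pairwise incident edge sets traversed
by `T`. -/
theorem no_traversal_for_K23_in_K5 (T : Set (Sym2 (Fin 5)))
    (hT : ∃ X Y : Finset (Fin 5), X.card = 2 ∧ Y.card = 3 ∧ Disjoint X Y ∧
      T = {e | ∃ x ∈ X, ∃ y ∈ Y, e = s(x, y)}) :
    ¬ ∃ 𝔎 : Set (Set (Sym2 (Fin 5))),
      (∀ A ∈ 𝔎, A ⊆ (⊤ : SimpleGraph (Fin 5)).edgeSet) ∧
      (∀ A ∈ 𝔎, EdgesConnected A) ∧
      (∀ A ∈ 𝔎, ∀ B ∈ 𝔎, A ≠ B → Disjoint A B) ∧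
      (∀ A ∈ 𝔎, ∀ B ∈ 𝔎, A ≠ B → EdgesIncident A B) ∧
      TraversedBy 𝔎 T := by
  classical
  rintro ⟨𝔎, hsub, hconn, hdisj, hinc, htrav⟩
  obtain ⟨X, Y, hX2, hY3, hDisj, hTdef⟩ := hT
  obtain ⟨x0, x1, hx01, hX⟩ := Finset.card_eq_two.mp hX2
  obtain ⟨y0, y1, y2, hy01, hy02, hy12, hY⟩ := Finset.card_eq_three.mp hY3
  subst hTdef; subst hX; subst hY
  have hd : ∀ u ∈ ({x0, x1} : Finset (Fin 5)), ∀ v ∈ ({y0, y1, y2} : Finset (Fin 5)), u ≠ v :=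
    fun u hu v hv h => (Finset.disjoint_left.mp hDisj hu) (h ▸ hv)
  have hx0X : x0 ∈ ({x0, x1} : Finset (Fin 5)) := by simp
  have hx1X : x1 ∈ ({x0, x1} : Finset (Fin 5)) := by simp
  have hy0Y : y0 ∈ ({y0, y1, y2} : Finset (Fin 5)) := by simp
  have hy1Y : y1 ∈ ({y0, y1, y2} : Finset (Fin 5)) := by simp
  have hy2Y : y2 ∈ ({y0, y1, y2} : Finset (Fin 5)) := by simp
  set ν : Fin 5 → Fin 5 := νf x0 x1 y0 y1 y2 with hνdef
  have hν : Function.Injective ν :=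
    νf_inj hx01 hy01 hy02 hy12 (hd _ hx0X _ hy0Y) (hd _ hx0X _ hy1Y) (hd _ hx0X _ hy2Y)
      (hd _ hx1X _ hy0Y) (hd _ hx1X _ hy1Y) (hd _ hx1X _ hy2Y)
  have hrinj : ∀ a ∈ idxs, ∀ b ∈ idxs, Sym2.map ν (cE a) = Sym2.map ν (cE b) → a = b :=
    fun a ha b hb h => cE_inj a ha b hb (Sym2.map.injective hν h)
  -- description of T via the canonical edges
  have hT' : ∀ e, (e ∈ {e | ∃ x ∈ ({x0, x1} : Finset (Fin 5)),
      ∃ y ∈ ({y0, y1, y2} : Finset (Fin 5)), e = s(x, y)} ↔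
      ∃ i ∈ msl, Sym2.map ν (cE i) = e) := by
    intro e
    simp only [Set.mem_setOf_eq, Finset.mem_insert, Finset.mem_singleton]
    constructor
    · rintro ⟨x, (rfl | rfl), y, (rfl | rfl | rfl), rfl⟩
      · exact ⟨0, by simp [msl], rfl⟩
      · exact ⟨1, by simp [msl], rfl⟩
      · exact ⟨2, by simp [msl], rfl⟩
      · exact ⟨3, by simp [msl], rfl⟩
      · exact ⟨4, by simp [msl], rfl⟩
      · exact ⟨5, by simp [msl], rfl⟩
    · rintro ⟨i, hi, rfl⟩
      simp only [msl, List.mem_cons, List.not_mem_nil, or_false] at hi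
      rcases hi with rfl | rfl | rfl | rfl | rfl | rfl
      · exact ⟨x0, Or.inl rfl, y0, Or.inl rfl, rfl⟩
      · exact ⟨x0, Or.inl rfl, y1, Or.inr (Or.inl rfl), rfl⟩
      · exact ⟨x0, Or.inl rfl, y2, Or.inr (Or.inr rfl), rfl⟩
      · exact ⟨x1, Or.inr rfl, y0, Or.inl rfl, rfl⟩
      · exact ⟨x1, Or.inr rfl, y1, Or.inr (Or.inl rfl), rfl⟩
      · exact ⟨x1, Or.inr rfl, y2, Or.inr (Or.inr rfl), rfl⟩
  -- every edge of K₅ is a relabeled canonical edge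
  have hsurj : Function.Surjective ν := Finite.injective_iff_surjective.mp hν
  have hcov : ∀ e ∈ (⊤ : SimpleGraph (Fin 5)).edgeSet, ∃ i ∈ idxs, Sym2.map ν (cE i) = e := by
    intro e he
    induction e with
    | _ a b =>
      rw [SimpleGraph.mem_edgeSet, SimpleGraph.top_adj] at he
      obtain ⟨a', rfl⟩ := hsurj a
      obtain ⟨b', rfl⟩ := hsurj b
      have hne : a' ≠ b' := fun h => he (by rw [h])
      obtain ⟨i, hi, hcE⟩ := cE_cover a' b' hne
      exact ⟨i, hi, by rw [hcE, Sym2.map_pair_eq]⟩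
  -- the member containing each T-edge
  have hexA : ∀ m : ℕ, ∃ S, m ∈ msl → S ∈ 𝔎 ∧ Sym2.map ν (cE m) ∈ S := by
    intro m
    by_cases hm : m ∈ msl
    · obtain ⟨S, hS, hmem⟩ := htrav.2 _ ((hT' _).2 ⟨m, hm, rfl⟩)
      exact ⟨S, fun _ => ⟨hS, hmem⟩⟩
    · exact ⟨∅, fun h => absurd h hm⟩
  choose A hA using hexA
  -- a member contains the canonical T-edge of its index only
  have hkey : ∀ m ∈ msl, ∀ i ∈ msl, Sym2.map ν (cE i) ∈ A m → i = m := by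
    intro m hm i hi hmem
    obtain ⟨e, _, hu⟩ := htrav.1 (A m) (hA m hm).1
    have h1 := hu _ ⟨(hT' _).2 ⟨i, hi, rfl⟩, hmem⟩
    have h2 := hu _ ⟨(hT' _).2 ⟨m, hm, rfl⟩, (hA m hm).2⟩
    exact hrinj i (msl_idxs i hi) m (msl_idxs m hm) (h1.trans h2.symm)
  have hAne : ∀ m ∈ msl, ∀ m' ∈ msl, m ≠ m' → A m ≠ A m' := by
    intro m hm m' hm' hne heq
    exact hne ((hkey m' hm' m hm (heq ▸ (hA m hm).2)).symm).symm
  -- the assignment of the extra edges to members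
  set o : Nat → Option Nat :=
    fun k => if h : ∃ m, m ∈ msl ∧ Sym2.map ν (cE k) ∈ A m then some h.choose else none
    with hodef
  have ho1 : ∀ k m, m ∈ msl → Sym2.map ν (cE k) ∈ A m → o k = some m := by
    intro k m hm hmem
    have h : ∃ m', m' ∈ msl ∧ Sym2.map ν (cE k) ∈ A m' := ⟨m, hm, hmem⟩
    have hspec := h.choose_spec
    have : h.choose = m := by
      by_contra hne
      have hAd := hdisj _ (hA _ hspec.1).1 _ (hA m hm).1 (hAne _ hspec.1 _ hm hne)
      exact (Set.disjoint_left.mp hAd hspec.2) hmem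
    rw [hodef]
    simp only [dif_pos h, this]
  have ho2 : ∀ k m, o k = some m → m ∈ msl ∧ Sym2.map ν (cE k) ∈ A m := by
    intro k m hk
    rw [hodef] at hk
    by_cases h : ∃ m ∈ msl, Sym2.map ν (cE k) ∈ A m
    · simp only [dif_pos h, Option.some.injEq] at hk
      exact hk ▸ h.choose_spec
    · simp only [dif_neg h] at hk
      exact nomatch hk
  have ho_opts : ∀ k, o k ∈ opts := by
    intro k
    rw [hodef]
    by_cases h : ∃ m ∈ msl, Sym2.map ν (cE k) ∈ A m
    · simp only [dif_pos h]
      simp only [opts, List.mem_cons, List.mem_map]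
      exact Or.inr ⟨h.choose, h.choose_spec.1, rfl⟩
    · simp only [dif_neg h]
      simp [opts]
  -- exact description of each member
  have hAeq : ∀ m ∈ msl, ∀ e, (e ∈ A m ↔
      ∃ i ∈ mList (o 6) (o 7) (o 8) (o 9) m, Sym2.map ν (cE i) = e) := by
    intro m hm e
    constructor
    · intro he
      obtain ⟨i, hi, rfl⟩ := hcov e (hsub _ (hA m hm).1 he)
      simp only [idxs, List.mem_cons, List.not_mem_nil, or_false] at hi
      have hmsl6 : ∀ j : ℕ, j = 0 ∨ j = 1 ∨ j = 2 ∨ j = 3 ∨ j = 4 ∨ j = 5 → j ∈ msl := by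
        intro j hj; simp only [msl, List.mem_cons, List.not_mem_nil, or_false]; exact hj
      rcases hi with rfl | rfl | rfl | rfl | rfl | rfl | rfl | rfl | rfl | rfl
      · exact ⟨_, mem_mList.mpr (Or.inl (hkey m hm _ (hmsl6 0 (by omega)) he)), rfl⟩
      · exact ⟨_, mem_mList.mpr (Or.inl (hkey m hm _ (hmsl6 1 (by omega)) he)), rfl⟩
      · exact ⟨_, mem_mList.mpr (Or.inl (hkey m hm _ (hmsl6 2 (by omega)) he)), rfl⟩
      · exact ⟨_, mem_mList.mpr (Or.inl (hkey m hm _ (hmsl6 3 (by omega)) he)), rfl⟩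
      · exact ⟨_, mem_mList.mpr (Or.inl (hkey m hm _ (hmsl6 4 (by omega)) he)), rfl⟩
      · exact ⟨_, mem_mList.mpr (Or.inl (hkey m hm _ (hmsl6 5 (by omega)) he)), rfl⟩
      · exact ⟨6, mem_mList.mpr (Or.inr (Or.inl ⟨ho1 6 m hm he, rfl⟩)), rfl⟩
      · exact ⟨7, mem_mList.mpr (Or.inr (Or.inr (Or.inl ⟨ho1 7 m hm he, rfl⟩))), rfl⟩
      · exact ⟨8, mem_mList.mpr (Or.inr (Or.inr (Or.inr (Or.inl ⟨ho1 8 m hm he, rfl⟩)))), rfl⟩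
      · exact ⟨9, mem_mList.mpr (Or.inr (Or.inr (Or.inr (Or.inr ⟨ho1 9 m hm he, rfl⟩)))), rfl⟩
    · rintro ⟨i, hi, rfl⟩
      rw [mem_mList] at hi
      rcases hi with rfl | ⟨h6, rfl⟩ | ⟨h7, rfl⟩ | ⟨h8, rfl⟩ | ⟨h9, rfl⟩
      · exact (hA i hm).2
      · exact (ho2 6 m h6).2
      · exact (ho2 7 m h7).2
      · exact (ho2 8 m h8).2
      · exact (ho2 9 m h9).2
  -- derive the combinatorial configuration and contradict the finite check
  have hfalse := mainCheck _ (ho_opts 6) _ (ho_opts 7) _ (ho_opts 8) _ (ho_opts 9)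
  suffices htrue : okCfg (o 6) (o 7) (o 8) (o 9) = true by
    rw [htrue] at hfalse; exact Bool.noConfusion hfalse
  unfold okCfg
  rw [Bool.and_eq_true]
  constructor
  · -- incidence part
    rw [List.all_eq_true]
    intro m hm
    rw [List.all_eq_true]
    intro m' hm'
    by_cases he : m = m'
    · simp [he]
    · rw [Bool.or_eq_true]
      right
      obtain ⟨e, heA, f, hfA, v, hv1, hv2⟩ :=
        hinc (A m) (hA m hm).1 (A m') (hA m' hm').1 (hAne m hm m' hm' he)
      obtain ⟨a, haL, rfl⟩ := (hAeq m hm e).1 heA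
      obtain ⟨b, hbL, rfl⟩ := (hAeq m' hm' f).1 hfA
      have ht : touch a b = true :=
        (touch_iff a (mList_subset_idxs hm a haL) b (mList_subset_idxs hm' b hbL)).2
          ((shareV_map hν _ _).1 ⟨v, hv1, hv2⟩)
      unfold incB
      rw [List.any_eq_true]
      exact ⟨a, haL, List.any_eq_true.mpr ⟨b, hbL, ht⟩⟩
  · -- connectivity part
    rw [List.all_eq_true]
    intro m hm
    unfold connSF
    rw [List.all_eq_true]
    intro C hC
    rw [List.mem_sublists] at hC
    rw [Bool.or_eq_true, Bool.or_eq_true]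
    by_cases hCE : C = []
    · exact Or.inl (Or.inl (by simp [hCE]))
    by_cases hall : ∀ b ∈ mList (o 6) (o 7) (o 8) (o 9) m, b ∈ C
    · exact Or.inl (Or.inr (List.all_eq_true.mpr fun b hb => decide_eq_true (hall b hb)))
    right
    push_neg at hall
    obtain ⟨b0, hb0F, hb0C⟩ := hall
    obtain ⟨a0, ha0C⟩ := List.exists_mem_of_ne_nil C hCE
    have hCF : ∀ i ∈ C, i ∈ mList (o 6) (o 7) (o 8) (o 9) m := fun i hi => hC.subset hi
    have he0 : Sym2.map ν (cE a0) ∈ A m := (hAeq m hm _).2 ⟨a0, hCF _ ha0C, rfl⟩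
    have hf0 : Sym2.map ν (cE b0) ∈ A m := (hAeq m hm _).2 ⟨b0, hb0F, rfl⟩
    have hf0C : Sym2.map ν (cE b0) ∉ {e | ∃ i ∈ C, Sym2.map ν (cE i) = e} := by
      rintro ⟨i, hiC, heq⟩
      have := hrinj i (mList_subset_idxs hm i (hCF i hiC)) b0
        (mList_subset_idxs hm b0 hb0F) heq
      exact hb0C (this ▸ hiC)
    have hrt := (hconn (A m) (hA m hm).1).2 _ he0 _ hf0
    obtain ⟨ea, haCs, eb, hbCs, hr⟩ := cross_rtg (C := {e | ∃ i ∈ C, Sym2.map ν (cE i) = e}) hrt ⟨a0, ha0C, rfl⟩ hf0C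
    obtain ⟨a, haC, rfl⟩ := haCs
    obtain ⟨_, hbA, v, hv1, hv2⟩ := hr
    obtain ⟨b, hbF, rfl⟩ := (hAeq m hm _).1 hbA
    have hbC : b ∉ C := fun h => hbCs ⟨b, h, rfl⟩
    have ht : touch a b = true :=
      (touch_iff a (mList_subset_idxs hm a (hCF a haC)) b (mList_subset_idxs hm b hbF)).2
        ((shareV_map hν _ _).1 ⟨v, hv1, hv2⟩)
    unfold cross
    rw [List.any_eq_true]
    exact ⟨b, hbF, by
      rw [Bool.and_eq_true]
      exact ⟨decide_eq_true hbC, List.any_eq_true.mpr ⟨a, haC, ht⟩⟩⟩
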